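/- If (v_n) is total in H (its closed linear span is H), then there exists an orthonormal basis (indexed family) {u_n : u_n ≠ 0} of H such that u_n ∈ H_{⌈n/2⌉} for every n, where H_m := closure(span{v_k : k ≥ m}). -/

import Mathlib

set_option linter.unusedSectionVars false
set_option linter.unusedVariables false

/-- Tail spaces of a sequence: `H_m` is the closed linear span of `{v_k : k ≥ m}`. -/
noncomputable def tailSpace {H : Type*} [NormedAddCommGroup H] [InnerProductSpace ℂ H]
    (v : ℕ → H) (m : ℕ) : Submodule ℂ H :=
  (Submodule.span ℂ (v '' {k | m ≤ k})).topologicalClosure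

namespace AdaptedONB

open Submodule Set

local notation "⟪" x ", " y "⟫" => @inner ℂ _ _ x y

variable {H : Type*} [NormedAddCommGroup H] [InnerProductSpace ℂ H] [CompleteSpace H]
  (v : ℕ → H)

lemma isClosed_tailSpace (m : ℕ) : IsClosed (tailSpace v m : Set H) :=
  Submodule.isClosed_topologicalClosure _

lemma tailSpace_antitone : Antitone (tailSpace v) := fun a b hab =>
  Submodule.topologicalClosure_mono
    (Submodule.span_mono (Set.image_mono fun k hk => hab.trans hk))

lemma v_mem_tailSpace {m k : ℕ} (h : m ≤ k) : v k ∈ tailSpace v m :=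
  Submodule.le_topologicalClosure _ (Submodule.subset_span ⟨k, h, rfl⟩)

lemma tailSpace_le_sup (m : ℕ) :
    tailSpace v m ≤ ((ℂ ∙ v m) ⊔ tailSpace v (m + 1)).topologicalClosure := by
  refine Submodule.topologicalClosure_mono ?_
  rw [Submodule.span_le]
  rintro x ⟨k, hk, rfl⟩
  rcases eq_or_lt_of_le (show m ≤ k from hk) with h | h
  · exact h ▸ Submodule.mem_sup_left (Submodule.mem_span_singleton_self _)
  · exact Submodule.mem_sup_right (v_mem_tailSpace v h)

/-- The projection of `v m` onto the orthocomplement of the next tail space. -/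
noncomputable def wvec (m : ℕ) : H :=
  haveI := (isClosed_tailSpace v (m + 1)).completeSpace_coe
  ↑(orthogonalProjection (tailSpace v (m + 1))ᗮ (v m))

lemma wvec_mem_orthogonal (m : ℕ) : wvec v m ∈ (tailSpace v (m + 1))ᗮ := by
  haveI := (isClosed_tailSpace v (m + 1)).completeSpace_coe
  exact Submodule.coe_mem _

lemma wvec_mem (m : ℕ) : wvec v m ∈ tailSpace v m := by
  haveI := (isClosed_tailSpace v (m + 1)).completeSpace_coe
  have : wvec v m = v m - ↑(orthogonalProjection (tailSpace v (m + 1)) (v m)) :=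
    starProjection_orthogonal_val _
  rw [this]
  exact sub_mem (v_mem_tailSpace v le_rfl)
    (tailSpace_antitone v (Nat.le_succ m) (Submodule.coe_mem _))

lemma mem_span_wvec {m : ℕ} {x : H} (hx : x ∈ tailSpace v m)
    (hx' : x ∈ (tailSpace v (m + 1))ᗮ) : x ∈ ℂ ∙ wvec v m := by
  haveI := (isClosed_tailSpace v (m + 1)).completeSpace_coe
  set K := tailSpace v (m + 1) with hK
  set L : H →L[ℂ] H := Kᗮ.subtypeL.comp (orthogonalProjection Kᗮ) with hL
  have hLx : L x = x := by
    simp only [hL, ContinuousLinearMap.comp_apply, Submodule.subtypeL_apply]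
    exact starProjection_eq_self_iff.2 hx'
  have hmaps : Set.MapsTo L (((ℂ ∙ v m) ⊔ K : Submodule ℂ H) : Set H)
      ((ℂ ∙ wvec v m : Submodule ℂ H) : Set H) := by
    intro y hy
    rcases Submodule.mem_sup.1 hy with ⟨a, ha, b, hb, rfl⟩
    rcases Submodule.mem_span_singleton.1 ha with ⟨c, rfl⟩
    have hb0 : L b = 0 := by
      simp only [hL, ContinuousLinearMap.comp_apply, Submodule.subtypeL_apply]
      rw [orthogonalProjection_mem_subspace_orthogonalComplement_eq_zero
        (K.le_orthogonal_orthogonal hb)]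
      simp
    have hvm : L (v m) = wvec v m := rfl
    rw [map_add, map_smul, hb0, add_zero, hvm]
    exact Submodule.smul_mem _ _ (Submodule.mem_span_singleton_self _)
  have hx2 : x ∈ closure (((ℂ ∙ v m) ⊔ K : Submodule ℂ H) : Set H) := by
    have h := tailSpace_le_sup v m hx
    rw [← Submodule.topologicalClosure_coe]
    exact h
  have := map_mem_closure L.continuous hx2 hmaps
  rw [hLx] at this
  rwa [IsClosed.closure_eq (Submodule.closed_of_finiteDimensional _)] at this

lemma descend {m : ℕ} {x : H} (hx : x ∈ tailSpace v m)
    (hw : ⟪wvec v m, x⟫ = 0) : x ∈ tailSpace v (m + 1) := by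
  haveI := (isClosed_tailSpace v (m + 1)).completeSpace_coe
  set K := tailSpace v (m + 1) with hK
  set p : H := ↑(orthogonalProjection K x) with hp
  have hyK : x - p ∈ Kᗮ := sub_starProjection_mem_orthogonal x
  have hyT : x - p ∈ tailSpace v m :=
    sub_mem hx (tailSpace_antitone v (Nat.le_succ m) (Submodule.coe_mem _))
  rcases Submodule.mem_span_singleton.1 (mem_span_wvec v hyT hyK) with ⟨c, hc⟩
  have h1 : ⟪x - p, x⟫ = 0 := by
    rw [← hc, inner_smul_left, hw, mul_zero]
  have h2 : ⟪x - p, p⟫ = 0 := (Submodule.mem_orthogonal' _ _).1 hyK _ (Submodule.coe_mem _)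
  have h3 : ⟪x - p, x - p⟫ = 0 := by
    rw [inner_sub_right, h1, h2, sub_zero]
  have h4 : x - p = 0 := inner_self_eq_zero.1 h3
  have : x = p := by rwa [sub_eq_zero] at h4
  rw [this]; exact Submodule.coe_mem _

lemma tailSpace_zero (hv : (Submodule.span ℂ (Set.range v)).topologicalClosure = ⊤) :
    tailSpace v 0 = ⊤ := by
  have h : {k : ℕ | 0 ≤ k} = Set.univ := Set.eq_univ_of_forall fun k => Nat.zero_le k
  rw [tailSpace, h, Set.image_univ, hv]

lemma separable (hv : (Submodule.span ℂ (Set.range v)).topologicalClosure = ⊤) :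
    TopologicalSpace.SeparableSpace H := by
  rw [← TopologicalSpace.isSeparable_univ_iff]
  have h1 : TopologicalSpace.IsSeparable
      ((Submodule.span ℂ (Set.range v) : Submodule ℂ H) : Set H) :=
    (Set.countable_range v).isSeparable.span
  have h2 := h1.closure
  rw [← Submodule.topologicalClosure_coe, hv] at h2
  simpa using h2

end AdaptedONB

/-- If `(v_n)_{n≥1}` is total, there is a family `(u_n)_{n≥1}` whose nonzero members form an
orthonormal basis of `H`, with `u_n ∈ H_{⌈n/2⌉}` for every `n ≥ 1`. -/
theorem exists_adapted_orthonormal_basis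
    {H : Type*} [NormedAddCommGroup H] [InnerProductSpace ℂ H] [CompleteSpace H]
    (v : ℕ → H)
    (hv : (Submodule.span ℂ (Set.range v)).topologicalClosure = ⊤) :
    ∃ u : ℕ → H,
      Orthonormal ℂ (fun n : {n : ℕ // u n ≠ 0} => u n) ∧
      (Submodule.span ℂ (Set.range fun n : {n : ℕ // u n ≠ 0} => u n)).topologicalClosure = ⊤ ∧
      ∀ n : ℕ, 1 ≤ n → u n ∈ tailSpace v ((n + 1) / 2) := by
  classical
  haveI hsep : TopologicalSpace.SeparableSpace H := AdaptedONB.separable v hv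
  haveI : SecondCountableTopology H := UniformSpace.secondCountable_of_separable H
  set Kinf : Submodule ℂ H := ⨅ m, tailSpace v m with hKinfdef
  have hKle : ∀ m, Kinf ≤ tailSpace v m := fun m => iInf_le (fun m => tailSpace v m) m
  have hKclosed : IsClosed (Kinf : Set H) := by
    have h : (Kinf : Set H) = ⋂ m, (tailSpace v m : Set H) := Submodule.coe_iInf _
    rw [h]; exact isClosed_iInter fun m => AdaptedONB.isClosed_tailSpace v m
  haveI : CompleteSpace ↥Kinf := hKclosed.completeSpace_coe
  obtain ⟨W, b, hbW⟩ := exists_hilbertBasis ℂ ↥Kinf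
  have hWnorm : ∀ x : W, ‖(x : ↥Kinf)‖ = 1 := fun x => by
    have := b.orthonormal.1 x; rwa [hbW] at this
  have hWinner : ∀ x y : W, x ≠ y → @inner ℂ _ _ (x : ↥Kinf) (y : ↥Kinf) = 0 := fun x y hxy => by
    have := b.orthonormal.2 hxy; rwa [hbW] at this
  haveI : Countable W := by
    have hd : Pairwise (Function.onFun Disjoint fun x : W => Metric.ball (x : ↥Kinf) (1/2)) := by
      intro x y hxy
      apply Metric.ball_disjoint_ball
      have h2 : ‖(x : ↥Kinf) - (y : ↥Kinf)‖ ^ 2 = 2 := by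
        rw [@norm_sub_sq ℂ, hWnorm, hWnorm, hWinner x y hxy]
        simp only [map_zero, mul_zero, sub_zero, one_pow]
        norm_num
      have hge : (1 : ℝ) ≤ dist (x : ↥Kinf) (y : ↥Kinf) := by
        rw [dist_eq_norm]
        nlinarith [norm_nonneg ((x : ↥Kinf) - (y : ↥Kinf))]
      linarith
    exact hd.countable_of_isOpen_disjoint (fun _ => Metric.isOpen_ball)
      (fun _ => Metric.nonempty_ball.2 (by norm_num))
  obtain ⟨g, hginj⟩ := Countable.exists_injective_nat W
  set f : ℕ → H := fun k => if h : ∃ x : W, g x = k then ((h.choose : ↥Kinf) : H) else 0 with hfdef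
  have hfK : ∀ k, f k ∈ Kinf := by
    intro k; rw [hfdef]; dsimp only; split_ifs with h
    · exact SetLike.coe_mem _
    · exact zero_mem _
  have hfnorm : ∀ k, f k ≠ 0 → ‖f k‖ = 1 := by
    intro k hk; rw [hfdef] at hk ⊢; dsimp only at hk ⊢; split_ifs at hk ⊢ with h
    · exact hWnorm h.choose
    · exact absurd rfl hk
  have hforth : ∀ k l : ℕ, k ≠ l → @inner ℂ _ _ (f k) (f l) = 0 := by
    intro k l hkl; rw [hfdef]; dsimp only; split_ifs with h1 h2
    · have hne : h1.choose ≠ h2.choose := by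
        intro he; apply hkl; rw [← h1.choose_spec, ← h2.choose_spec, he]
      have := hWinner _ _ hne
      rwa [Submodule.coe_inner] at this
    · rw [inner_zero_right]
    · rw [inner_zero_left]
    · rw [inner_zero_left]
  have hfcomp : ∀ x : H, x ∈ Kinf → (∀ k, @inner ℂ _ _ (f k) x = 0) → x = 0 := by
    intro x hx hfx
    set x' : ↥Kinf := ⟨x, hx⟩ with hx'def
    have hWx : ∀ y : ↥Kinf, y ∈ W → @inner ℂ _ _ x' y = 0 := by
      intro y hy
      have hex : ∃ z : W, g z = g ⟨y, hy⟩ := ⟨⟨y, hy⟩, rfl⟩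
      have hk := hfx (g (⟨y, hy⟩ : W))
      rw [hfdef] at hk; dsimp only at hk
      rw [dif_pos hex] at hk
      have hch : hex.choose = ⟨y, hy⟩ := hginj hex.choose_spec
      rw [hch] at hk
      rw [← inner_conj_symm, Submodule.coe_inner]
      rw [show (inner ℂ (y : H) (x' : H) : ℂ) = 0 from hk]
      simp
    have hdense : Dense ((Submodule.span ℂ (Set.range ⇑b) : Submodule ℂ ↥Kinf) : Set ↥Kinf) := by
      rw [dense_iff_closure_eq, ← Submodule.topologicalClosure_coe, b.dense_span, Submodule.top_coe]
    have hz : x' = 0 := by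
      apply hdense.eq_zero_of_inner_left ℂ
      rintro c hc
      show @inner ℂ _ _ x' c = 0
      refine Submodule.span_induction (fun z hz => ?_) ?_
        (fun a b _ _ ha hb => ?_) (fun r a _ ha => ?_) hc
      · rw [hbW, Subtype.range_coe] at hz
        exact hWx z hz
      · rw [inner_zero_right]
      · rw [inner_add_right, ha, hb, add_zero]
      · rw [inner_smul_right, ha, mul_zero]
    have := congrArg Subtype.val hz
    simpa [hx'def] using this
  -- the gap vectors
  set e : ℕ → H := fun m => ((‖AdaptedONB.wvec v m‖ : ℂ))⁻¹ • AdaptedONB.wvec v m with hedef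
  have heT : ∀ m, e m ∈ tailSpace v m := fun m => Submodule.smul_mem _ _ (AdaptedONB.wvec_mem v m)
  have heO : ∀ m, e m ∈ (tailSpace v (m + 1))ᗮ := fun m =>
    Submodule.smul_mem _ _ (AdaptedONB.wvec_mem_orthogonal v m)
  have henorm : ∀ m, e m ≠ 0 → ‖e m‖ = 1 := by
    intro m hm
    have hw : AdaptedONB.wvec v m ≠ 0 := by
      intro h0; apply hm; rw [hedef]; dsimp only; rw [h0]; simp
    rw [hedef]; dsimp only
    rw [norm_smul, norm_inv, Complex.norm_real, norm_norm]
    exact inv_mul_cancel₀ (norm_ne_zero_iff.2 hw)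
  have hew : ∀ m (x : H), @inner ℂ _ _ (e m) x = 0 → @inner ℂ _ _ (AdaptedONB.wvec v m) x = 0 := by
    intro m x hx
    by_cases h0 : AdaptedONB.wvec v m = 0
    · rw [h0, inner_zero_left]
    · rw [hedef] at hx; dsimp only at hx
      rw [inner_smul_left] at hx
      rcases mul_eq_zero.1 hx with h | h
      · exfalso
        apply norm_ne_zero_iff.2 h0
        have : ((‖AdaptedONB.wvec v m‖ : ℝ) : ℂ)⁻¹ = 0 := by
          have := congrArg (starRingEnd ℂ) h
          simpa using this
        rw [inv_eq_zero] at this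
        exact_mod_cast this
      · exact h
  have hee : ∀ a b : ℕ, a ≠ b → @inner ℂ _ _ (e a) (e b) = 0 := by
    intro a b hab
    rcases lt_or_gt_of_ne hab with h | h
    · exact (Submodule.mem_orthogonal' _ _).1 (heO a) _ (AdaptedONB.tailSpace_antitone v h (heT b))
    · rw [inner_eq_zero_symm]
      exact (Submodule.mem_orthogonal' _ _).1 (heO b) _ (AdaptedONB.tailSpace_antitone v h (heT a))
  have hef : ∀ m k, @inner ℂ _ _ (e m) (f k) = 0 := fun m k =>
    (Submodule.mem_orthogonal' _ _).1 (heO m) _ (hKle (m + 1) (hfK k))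
  -- assemble
  set u : ℕ → H := fun n => if n % 2 = 0 ∧ n ≠ 0 then f (n / 2 - 1) else e ((n + 1) / 2) with hudef
  have hu0 : ∀ n, ¬(n % 2 = 0 ∧ n ≠ 0) → u n = e ((n + 1) / 2) := by
    intro n h; rw [hudef]; dsimp only; rw [if_neg h]
  have hu1 : ∀ n, (n % 2 = 0 ∧ n ≠ 0) → u n = f (n / 2 - 1) := by
    intro n h; rw [hudef]; dsimp only; rw [if_pos h]
  refine ⟨u, ⟨?_, ?_⟩, ?_, ?_⟩
  · rintro ⟨n, hn⟩
    show ‖u n‖ = 1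
    by_cases h : n % 2 = 0 ∧ n ≠ 0
    · rw [hu1 n h] at hn ⊢; exact hfnorm _ hn
    · rw [hu0 n h] at hn ⊢; exact henorm _ hn
  · rintro ⟨n, hn⟩ ⟨n', hn'⟩ hne
    have hnn' : n ≠ n' := fun h => hne (Subtype.ext h)
    show @inner ℂ _ _ (u n) (u n') = 0
    by_cases h1 : n % 2 = 0 ∧ n ≠ 0 <;> by_cases h2 : n' % 2 = 0 ∧ n' ≠ 0
    · rw [hu1 n h1, hu1 n' h2]
      exact hforth _ _ (by omega)
    · rw [hu1 n h1, hu0 n' h2, inner_eq_zero_symm]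
      exact hef _ _
    · rw [hu0 n h1, hu1 n' h2]
      exact hef _ _
    · rw [hu0 n h1, hu0 n' h2]
      exact hee _ _ (by omega)
  · rw [Submodule.topologicalClosure_eq_top_iff, Submodule.eq_bot_iff]
    intro x hx
    have hun : ∀ n, @inner ℂ _ _ (u n) x = 0 := by
      intro n
      by_cases h : u n = 0
      · rw [h, inner_zero_left]
      · exact (Submodule.mem_orthogonal _ x).1 hx _ (Submodule.subset_span ⟨⟨n, h⟩, rfl⟩)
    have he0 : ∀ m, @inner ℂ _ _ (e m) x = 0 := by
      intro m
      rcases Nat.eq_zero_or_pos m with rfl | hm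
      · have h := hun 0
        rwa [hu0 0 (by omega), (by omega : (0 + 1) / 2 = 0)] at h
      · have h := hun (2 * m - 1)
        rwa [hu0 _ (by omega), (by omega : (2 * m - 1 + 1) / 2 = m)] at h
    have hf0 : ∀ k, @inner ℂ _ _ (f k) x = 0 := by
      intro k
      have h := hun (2 * k + 2)
      rwa [hu1 _ (by omega), (by omega : (2 * k + 2) / 2 - 1 = k)] at h
    have hT : ∀ m, x ∈ tailSpace v m := by
      intro m
      induction m with
      | zero => rw [AdaptedONB.tailSpace_zero v hv]; trivial
      | succ m ih => exact AdaptedONB.descend v ih (hew m x (he0 m))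
    exact hfcomp x ((Submodule.mem_iInf _).2 hT) hf0
  · intro n hn
    by_cases h : n % 2 = 0 ∧ n ≠ 0
    · rw [hu1 n h]
      exact hKle ((n + 1) / 2) (hfK _)
    · rw [hu0 n h]
      exact heT _
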